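/- If σ and σ' are copyless substitutions over a commutative semiring that are both in normal form with respect to a linear order ⪯ on the variable set X, then their composition σ ∘ σ' is a copyless substitution in normal form with respect to ⪯. -/

import Mathlib

/-! ### Expressions over a semiring with variables -/

/-- Syntax trees of expressions over a semiring `S` with variables in `X`,
built from constants, variables, and the two semiring operations. -/
inductive Expr (S X : Type) : Type where
  | const : S → Expr S X
  | var : X → Expr S X
  | add : Expr S X → Expr S X → Expr S X
  | mul : Expr S X → Expr S X → Expr S X

namespace Expr

variable {S X Y : Type}

/-- Evaluation of an expression under a valuation `ν : X → S`. -/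
def eval [Add S] [Mul S] (ν : X → S) : Expr S X → S
  | const c => c
  | var x => ν x
  | add e₁ e₂ => e₁.eval ν + e₂.eval ν
  | mul e₁ e₂ => e₁.eval ν * e₂.eval ν

/-- Number of occurrences of the variable `x` in an expression. -/
def varCount [DecidableEq X] (x : X) : Expr S X → ℕ
  | const _ => 0
  | var y => if y = x then 1 else 0
  | add e₁ e₂ => e₁.varCount x + e₂.varCount x
  | mul e₁ e₂ => e₁.varCount x + e₂.varCount x

/-- The set `Var(e)` of variables occurring in an expression. -/
def vars [DecidableEq X] : Expr S X → Finset X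
  | const _ => ∅
  | var x => {x}
  | add e₁ e₂ => e₁.vars ∪ e₂.vars
  | mul e₁ e₂ => e₁.vars ∪ e₂.vars

/-- An expression is copyless if every variable occurs at most once in it. -/
def Copyless [DecidableEq X] (e : Expr S X) : Prop :=
  ∀ x : X, e.varCount x ≤ 1

/-- Substituting an expression `σ x` for each variable `x`. -/
def subst (σ : X → Expr S Y) : Expr S X → Expr S Y
  | const c => const c
  | var x => σ x
  | add e₁ e₂ => add (e₁.subst σ) (e₂.subst σ)
  | mul e₁ e₂ => mul (e₁.subst σ) (e₂.subst σ)

/-- An expression never mentions the constant `0`. -/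
def ZeroFree [Zero S] : Expr S X → Prop
  | const c => c ≠ (0 : S)
  | var _ => True
  | add e₁ e₂ => e₁.ZeroFree ∧ e₂.ZeroFree
  | mul e₁ e₂ => e₁.ZeroFree ∧ e₂.ZeroFree

/-- Number of constants mentioned in an expression. -/
def constCount : Expr S X → ℕ
  | const _ => 1
  | var _ => 0
  | add e₁ e₂ => e₁.constCount + e₂.constCount
  | mul e₁ e₂ => e₁.constCount + e₂.constCount

/-- The top node of the expression is a `⊕`-node. -/
def isAddNode : Expr S X → Bool
  | add _ _ => true
  | _ => false

/-- The top node of the expression is a `⊙`-node. -/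
def isMulNode : Expr S X → Bool
  | mul _ _ => true
  | _ => false

/-- The alternation `Alt(e)` of an expression: the maximal number of shifts
between `⊕` and `⊙` along branches of the parse tree. -/
def alt : Expr S X → ℕ
  | const _ => 0
  | var _ => 0
  | add e₁ e₂ =>
      max (e₁.alt + (if e₁.isMulNode then 1 else 0))
          (e₂.alt + (if e₂.isMulNode then 1 else 0)) + 1
  | mul e₁ e₂ =>
      max (e₁.alt + (if e₁.isAddNode then 1 else 0))
          (e₂.alt + (if e₂.isAddNode then 1 else 0)) + 1

end Expr

/-! ### Substitutions -/

namespace Subs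

variable {S X : Type}

/-- A substitution is copyless if each `σ x` is a copyless expression and
distinct registers use disjoint sets of variables. -/
def Copyless [DecidableEq X] (σ : X → Expr S X) : Prop :=
  (∀ x : X, (σ x).Copyless) ∧
    ∀ x y : X, x ≠ y → Disjoint ((σ x).vars) ((σ y).vars)

/-- Composition `σ ∘ τ` of substitutions: `(σ ∘ τ)(x) = σ̂(τ(x))`. -/
def comp (σ τ : X → Expr S X) : X → Expr S X :=
  fun x => (τ x).subst σ

/-- The identity substitution. -/
def idS : X → Expr S X := fun x => Expr.var x

/-- `σ^n`, the `n`-fold composition of `σ` with itself. -/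
def iterate (σ : X → Expr S X) : ℕ → (X → Expr S X)
  | 0 => idS
  | n + 1 => comp σ (iterate σ n)

/-- A substitution is in normal form w.r.t. the order on `X` if every variable
mentioned in `σ x` is at least `x`. -/
def NormalForm [DecidableEq X] [LE X] (σ : X → Expr S X) : Prop :=
  ∀ x y : X, y ∈ (σ x).vars → x ≤ y

/-- The register `x` is `σ`-stable, i.e. `x ∈ Var(σ x)`. -/
def Stable [DecidableEq X] (σ : X → Expr S X) (x : X) : Prop :=
  x ∈ (σ x).vars

/-- A substitution is collapsing if every non-`σ`-stable register is mapped
to a variable-free (ground) expression. -/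
def Collapsing [DecidableEq X] (σ : X → Expr S X) : Prop :=
  ∀ y : X, ¬ Stable σ y → (σ y).vars = ∅

end Subs

/-! ### Cost register automata -/

/-- A cost register automaton over semiring `S`, alphabet `A` and registers `X`. -/
structure CRA (S A X : Type) where
  Q : Type
  [finQ : Fintype Q]
  δ : Q → A → Q × (X → Expr S X)
  q0 : Q
  ν0 : X → S
  μ : Q → Expr S X

attribute [instance] CRA.finQ

namespace CRA

variable {S A X : Type}

/-- One step of the run of a CRA on a letter. -/
def step [Add S] [Mul S] (M : CRA S A X) (c : M.Q × (X → S)) (a : A) : M.Q × (X → S) :=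
  ((M.δ c.1 a).1, fun x => ((M.δ c.1 a).2 x).eval c.2)

/-- The configuration reached by the (unique) run of a CRA on a word. -/
def run [Add S] [Mul S] (M : CRA S A X) (w : List A) : M.Q × (X → S) :=
  w.foldl M.step (M.q0, M.ν0)

/-- The output `⟦M⟧(w)` of the CRA on the word `w`. -/
def output [Add S] [Mul S] (M : CRA S A X) (w : List A) : S :=
  (M.μ (M.run w).1).eval (M.run w).2

/-- A CRA is copyless if all its transition substitutions and all its output
expressions are copyless. -/
def CopylessCRA [DecidableEq X] (M : CRA S A X) : Prop :=
  (∀ (q : M.Q) (a : A), Subs.Copyless (M.δ q a).2) ∧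
    ∀ q : M.Q, (M.μ q).Copyless

/-- The transitive closure `δ*` of the transition function, composing the
substitutions along the word. -/
def deltaStar (M : CRA S A X) (q : M.Q) : List A → M.Q × (X → Expr S X)
  | [] => (q, Subs.idS)
  | a :: w =>
      ((M.deltaStar (M.δ q a).1 w).1,
        Subs.comp (M.δ q a).2 ((M.deltaStar (M.δ q a).1 w).2))

/-- A CRA is in normal form if all its transition substitutions are. -/
def NormalFormCRA [DecidableEq X] [LE X] (M : CRA S A X) : Prop :=
  ∀ (q : M.Q) (a : A), Subs.NormalForm (M.δ q a).2

/-- A register is stable in `M` if it is stable on every substitution occurring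
in `δ*`. -/
def StableIn [DecidableEq X] (M : CRA S A X) (x : X) : Prop :=
  ∀ (q : M.Q) (w : List A), Subs.Stable (M.deltaStar q w).2 x

/-- Every state of `M` is reachable from every state. -/
def StronglyConnected (M : CRA S A X) : Prop :=
  ∀ q q' : M.Q, ∃ w : List A, (M.deltaStar q w).1 = q'

/-- The ground expression `ν0 ∘ σ1 ∘ … ∘ σn ∘ μ(qn)` arising from the run on `w`. -/
def groundExpr (M : CRA S A X) (w : List A) : Expr S X :=
  ((M.μ (M.deltaStar M.q0 w).1).subst ((M.deltaStar M.q0 w).2)).subst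
    (fun x => Expr.const (M.ν0 x))

/-- The CRA has bounded alternation: the alternation of all ground output
expressions is uniformly bounded. -/
def BoundedAlt (M : CRA S A X) : Prop :=
  ∃ N : ℕ, ∀ w : List A, (M.groundExpr w).alt ≤ N

end CRA

section Aux

variable {S X : Type} [DecidableEq X]

lemma vars_subst (σ : X → Expr S X) (e : Expr S X) :
    (e.subst σ).vars = e.vars.biUnion (fun y => (σ y).vars) := by
  induction e with
  | const c => simp [Expr.subst, Expr.vars]
  | var x => simp [Expr.subst, Expr.vars]
  | add e₁ e₂ ih₁ ih₂ => simp [Expr.subst, Expr.vars, ih₁, ih₂]; ext z; simp; aesop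
  | mul e₁ e₂ ih₁ ih₂ => simp [Expr.subst, Expr.vars, ih₁, ih₂]; ext z; simp; aesop

lemma mem_vars_iff (e : Expr S X) (x : X) : x ∈ e.vars ↔ 0 < e.varCount x := by
  induction e with
  | const c => simp [Expr.vars, Expr.varCount]
  | var y =>
    simp only [Expr.vars, Expr.varCount, Finset.mem_singleton]
    by_cases h : y = x
    · simp [h]
    · simp only [h, if_false]
      exact iff_of_false (fun e => h e.symm) (by omega)
  | add e₁ e₂ ih₁ ih₂ => simp only [Expr.vars, Expr.varCount, Finset.mem_union, ih₁, ih₂]; omega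
  | mul e₁ e₂ ih₁ ih₂ => simp only [Expr.vars, Expr.varCount, Finset.mem_union, ih₁, ih₂]; omega

lemma subst_copyless (σ : X → Expr S X) (hσ : Subs.Copyless σ)
    (e : Expr S X) (he : e.Copyless) : (e.subst σ).Copyless := by
  induction e with
  | const c => intro x; simp [Expr.subst, Expr.varCount]
  | var y => exact hσ.1 y
  | add e₁ e₂ ih₁ ih₂ | mul e₁ e₂ ih₁ ih₂ =>
    have he₁ : e₁.Copyless := fun x => by
      have := he x; simp [Expr.varCount] at this; omega
    have he₂ : e₂.Copyless := fun x => by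
      have := he x; simp [Expr.varCount] at this; omega
    intro x
    have c₁ := ih₁ he₁ x
    have c₂ := ih₂ he₂ x
    simp only [Expr.subst, Expr.varCount]
    rcases Nat.eq_zero_or_pos ((e₁.subst σ).varCount x) with h0 | hp
    · omega
    rcases Nat.eq_zero_or_pos ((e₂.subst σ).varCount x) with h0 | hp2
    · omega
    exfalso
    have m₁ : x ∈ (e₁.subst σ).vars := (mem_vars_iff _ _).2 hp
    have m₂ : x ∈ (e₂.subst σ).vars := (mem_vars_iff _ _).2 hp2
    rw [vars_subst] at m₁ m₂
    obtain ⟨y₁, hy₁, hx₁⟩ := Finset.mem_biUnion.1 m₁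
    obtain ⟨y₂, hy₂, hx₂⟩ := Finset.mem_biUnion.1 m₂
    have hne : y₁ ≠ y₂ := by
      rintro rfl
      have := he y₁
      simp [Expr.varCount] at this
      have p₁ := (mem_vars_iff e₁ y₁).1 hy₁
      have p₂ := (mem_vars_iff e₂ y₁).1 hy₂
      omega
    exact Finset.disjoint_left.1 (hσ.2 y₁ y₂ hne) hx₁ hx₂

end Aux

/-! ### STATEMENT 3
The composition of two copyless substitutions in normal form is again a
copyless substitution in normal form. -/
theorem comp_copyless_normalForm {S X : Type} [CommSemiring S] [DecidableEq X]
    [LinearOrder X] (σ σ' : X → Expr S X)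
    (h₁ : Subs.Copyless σ) (h₂ : Subs.Copyless σ')
    (n₁ : Subs.NormalForm σ) (n₂ : Subs.NormalForm σ') :
    Subs.Copyless (Subs.comp σ σ') ∧ Subs.NormalForm (Subs.comp σ σ') := by
  constructor
  · constructor
    · intro x
      exact subst_copyless σ h₁ (σ' x) (h₂.1 x)
    · intro x y hxy
      rw [Finset.disjoint_left]
      intro z hz hz'
      simp only [Subs.comp, vars_subst, Finset.mem_biUnion] at hz hz'
      obtain ⟨a, ha, hza⟩ := hz
      obtain ⟨b, hb, hzb⟩ := hz'
      have hab : a ≠ b := by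
        rintro rfl
        exact Finset.disjoint_left.1 (h₂.2 x y hxy) ha hb
      exact Finset.disjoint_left.1 (h₁.2 a b hab) hza hzb
  · intro x y hy
    simp only [Subs.comp, vars_subst, Finset.mem_biUnion] at hy
    obtain ⟨z, hz, hyz⟩ := hy
    exact le_trans (n₂ x z hz) (n₁ z y hyz)
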